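/- Let C = {c_1,…,c_m} be candidate locations, E = {e_1,…,e_n} expert locations in a normed vector space, and ≻^k an inducible top-k ranking profile. Then the weighted directed graph G(C, E, ≻^k) has no negative-weight directed cycles: for every directed cycle j_1 → j_2 → … → j_T → j_{T+1} = j_1 in G(C, E, ≻^k), the sum of the edge weights Σ_{t=1}^{T} w(j_t, j_{t+1}) is nonnegative. -/

import Mathlib

open scoped Classical

section VotingDefs

variable {V : Type*} [NormedAddCommGroup V] [NormedSpace ℝ V]

/-- An expert with top-`k` ranking `pref : Fin k → Fin m` prefers candidate `j` to `j'`: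
`j` is ranked at some position `h`, and `j'` is either unranked or ranked strictly later. -/
def Prefers {k m : ℕ} (pref : Fin k → Fin m) (j j' : Fin m) : Prop :=
  ∃ h : Fin k, pref h = j ∧
    ((∀ h' : Fin k, pref h' ≠ j') ∨ ∃ h' : Fin k, pref h' = j' ∧ h < h')

/-- `q` is consistent with the profile `pref` of top-`k` rankings, given candidate
locations `c` and expert locations `e`. -/
def Consistent {n k m : ℕ} (c : Fin m → V) (e : Fin n → V)
    (pref : Fin n → Fin k → Fin m) (q : Fin m → ℝ) : Prop :=
  ∀ (i : Fin n) (j j' : Fin m), Prefers (pref i) j j' →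
    q j' - ‖e i - c j'‖ ≤ q j - ‖e i - c j‖

/-- Edge relation of the graph `G(C, E, ≻^k)`. -/
def HasEdge {n k m : ℕ} (pref : Fin n → Fin k → Fin m) (j j' : Fin m) : Prop :=
  ∃ i : Fin n, Prefers (pref i) j j'

/-- Weight of the edge `j → j'` in `G(C, E, ≻^k)`: the minimum of
`‖e i - c j'‖ - ‖e i - c j‖` over experts `i` preferring `j` to `j'`. -/
noncomputable def weightG {n k m : ℕ} (c : Fin m → V) (e : Fin n → V)
    (pref : Fin n → Fin k → Fin m) (j j' : Fin m) : ℝ :=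
  sInf {x : ℝ | ∃ i : Fin n, Prefers (pref i) j j' ∧ x = ‖e i - c j'‖ - ‖e i - c j‖}

/-- A directed walk along `edge` from `g` to `h`, recorded as its list of vertices. -/
def IsWalk {α : Type*} (edge : α → α → Prop) (l : List α) (g h : α) : Prop :=
  l.Chain' edge ∧ l.head? = some g ∧ l.getLast? = some h

/-- Total weight of a walk (sum of the weights of consecutive pairs). -/
noncomputable def walkWeight {α : Type*} (w : α → α → ℝ) (l : List α) : ℝ :=
  ((l.zip l.tail).map fun p => w p.1 p.2).sum

/-- Shortest directed path distance; `+∞` if there is no directed path. -/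
noncomputable def distG {α : Type*} (edge : α → α → Prop) (w : α → α → ℝ) (g h : α) : EReal :=
  sInf {x : EReal | ∃ l : List α, IsWalk edge l g h ∧ x = ((walkWeight w l : ℝ) : EReal)}

/-- Distance (number of edges) in an unweighted directed graph; `⊤` if unreachable. -/
noncomputable def hopDist {α : Type*} (edge : α → α → Prop) (g h : α) : ℕ∞ :=
  sInf {x : ℕ∞ | ∃ l : List α, IsWalk edge l g h ∧ x = ((l.length - 1 : ℕ) : ℕ∞)}

/-- `diam(G, S)`: the longest shortest-path length between two vertices of `S`. -/
noncomputable def diamS {α : Type*} (edge : α → α → Prop) (S : Set α) : ℕ∞ :=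
  ⨆ (u : α) (_ : u ∈ S) (v : α) (_ : v ∈ S), hopDist edge u v

/-- Edge relation of the unweighted graph `G(C, E, ≻^k)[δ]`. -/
def EdgeDelta {n k m : ℕ} (e : Fin n → V) (pref : Fin n → Fin k → Fin m) (δ : ℝ)
    (j j' : Fin m) : Prop :=
  ∃ i i' : Fin n, Prefers (pref i) j j' ∧ Prefers (pref i') j' j ∧ ‖e i - e i'‖ ≤ δ

/-- Minimum cardinality of an internal `δ`-cover of `Θ`; `⊤` if no finite cover exists. -/
noncomputable def coverNum (Θ : Set V) (δ : ℝ) : ℕ∞ :=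
  sInf {x : ℕ∞ | ∃ X : Finset V, ↑X ⊆ Θ ∧ (∀ θ ∈ Θ, ∃ v ∈ X, ‖θ - v‖ ≤ δ) ∧ x = (X.card : ℕ∞)}

end VotingDefs


private lemma weight_lb {V : Type*} [NormedAddCommGroup V] [NormedSpace ℝ V]
    {n k m : ℕ} (c : Fin m → V) (e : Fin n → V) (pref : Fin n → Fin k → Fin m)
    {q : Fin m → ℝ} (hq : Consistent c e pref q) {j j' : Fin m}
    (h : HasEdge pref j j') : q j' - q j ≤ weightG c e pref j j' := by
  obtain ⟨i, hi⟩ := h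
  have hne : {x : ℝ | ∃ i : Fin n, Prefers (pref i) j j' ∧ x = ‖e i - c j'‖ - ‖e i - c j‖}.Nonempty :=
    ⟨‖e i - c j'‖ - ‖e i - c j‖, i, hi, rfl⟩
  apply le_csInf hne
  rintro x ⟨i', hi', rfl⟩
  have := hq i' j j' hi'
  linarith

private lemma chain_lb {V : Type*} [NormedAddCommGroup V] [NormedSpace ℝ V]
    {n k m : ℕ} (c : Fin m → V) (e : Fin n → V) (pref : Fin n → Fin k → Fin m)
    {q : Fin m → ℝ} (hq : Consistent c e pref q) :
    ∀ (l : List (Fin m)) (a : Fin m), (a :: l).Chain' (HasEdge pref) →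
      q ((a :: l).getLast (by simp)) - q a ≤ walkWeight (weightG c e pref) (a :: l) := by
  intro l
  induction l with
  | nil => intro a _; simp [walkWeight]
  | cons b l ih =>
    intro a hch
    rw [List.Chain', List.isChain_cons_cons] at hch
    have h1 := weight_lb c e pref hq hch.1
    have h2 := ih b hch.2
    have hw : walkWeight (weightG c e pref) (a :: b :: l)
        = weightG c e pref a b + walkWeight (weightG c e pref) (b :: l) := by
      simp [walkWeight]
    have hlast : (a :: b :: l).getLast (by simp) = (b :: l).getLast (by simp) := by
      simp [List.getLast_cons]
    rw [hw, hlast]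
    linarith

/-- For an inducible top-`k` profile, `G(C, E, ≻^k)` has no
negative-weight directed cycles: every closed directed walk (with at least one edge)
has nonnegative total weight. -/
theorem statement2 {V : Type*} [NormedAddCommGroup V] [NormedSpace ℝ V]
    {n k m : ℕ} (c : Fin m → V) (e : Fin n → V) (pref : Fin n → Fin k → Fin m)
    (hinj : ∀ i, Function.Injective (pref i))
    (hind : ∃ q : Fin m → ℝ, Consistent c e pref q) :
    ∀ (j : Fin m) (l : List (Fin m)), 2 ≤ l.length →
      IsWalk (HasEdge pref) l j j →
      0 ≤ walkWeight (weightG c e pref) l := by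
  obtain ⟨q, hq⟩ := hind
  intro j l hlen hwalk
  obtain ⟨hch, hhead, hlast⟩ := hwalk
  match l, hlen with
  | a :: l', _ =>
    have ha : a = j := by simpa using hhead
    subst ha
    have hl : (a :: l').getLast (by simp) = a := by
      have := List.getLast?_eq_getLast (l := a :: l') (by simp)
      rw [this] at hlast
      exact Option.some_injective _ hlast
    have := chain_lb c e pref hq l' a hch
    rw [hl] at this
    linarith
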